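/- In a rooted forest, a single edge insertion or deletion changes the canonical subtree-isomorphism label of at most σ vertices, where σ is the maximum depth of any tree in the forest (before and after the operation). Formally: if forest F' is obtained from F by deleting one edge (the child becoming a new root) or inserting one edge (whose child was a root), then the number of vertices v present in both forests whose rooted subtree isomorphism class differs between F and F' is at most σ. -/

import Mathlib

/-- `a` is a descendant of `v` (reflexively) under the parent map `p`. -/
def PDesc {V : Type*} (p : V → Option V) (v a : V) : Prop :=
  Relation.ReflTransGen (fun x y : V => p y = some x) v a

/-- The rooted subtrees at `v` (under `p`) and at `w` (under `p'`) are isomorphic. -/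
def PSubtreeIso {V : Type*} (p p' : V → Option V) (v w : V) : Prop :=
  ∃ φ : {a : V // PDesc p v a} ≃ {b : V // PDesc p' w b},
    (φ ⟨v, Relation.ReflTransGen.refl⟩).1 = w ∧
    ∀ a b : {a : V // PDesc p v a},
      p b.1 = some a.1 ↔ p' (φ b).1 = some (φ a).1

/-- The ancestors of `v` (including `v` itself) under the parent map `p`. -/
def PAnc {V : Type*} (p : V → Option V) (v : V) : Set V :=
  {a | Relation.ReflTransGen (fun x y : V => p x = some y) v a}

lemma PSubtreeIso.symm' {V : Type*} {p p' : V → Option V} {v w : V}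
    (h : PSubtreeIso p p' v w) : PSubtreeIso p' p w v := by
  obtain ⟨φ, hroot, hedge⟩ := h
  have hroot' : φ ⟨v, Relation.ReflTransGen.refl⟩ = ⟨w, Relation.ReflTransGen.refl⟩ :=
    Subtype.ext hroot
  refine ⟨φ.symm, ?_, ?_⟩
  · rw [← hroot', Equiv.symm_apply_apply]
  · intro a b
    have := hedge (φ.symm a) (φ.symm b)
    simp only [Equiv.apply_symm_apply] at this
    exact this.symm

/-- Key lemma: after deleting the parent edge of `x` (whose old parent is `u`),
every vertex `v` that is not an ancestor of `u` has an unchanged subtree. -/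
lemma key_lemma {V : Type*} (p p' : V → Option V) (x u v : V)
    (heq : ∀ z : V, z ≠ x → p' z = p z) (hpx : p x = some u) (hpx' : p' x = none)
    (hv : v ∉ PAnc p u) : PSubtreeIso p p' v v := by
  have hu : ¬ PDesc p v u := by
    intro h
    exact hv (Relation.ReflTransGen.swap _ _ h)
  have hdesc : ∀ a, PDesc p v a ↔ PDesc p' v a := by
    intro a
    constructor
    · intro h
      induction h with
      | refl => exact Relation.ReflTransGen.refl
      | @tail b c hab hbc ih =>
        by_cases hc : c = x
        · subst hc
          rw [hpx] at hbc
          injection hbc with hbc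
          exact absurd (hbc ▸ hab) hu
        · exact ih.tail (by rw [heq c hc]; exact hbc)
    · intro h
      induction h with
      | refl => exact Relation.ReflTransGen.refl
      | @tail b c hab hbc ih =>
        by_cases hc : c = x
        · subst hc
          rw [hpx'] at hbc
          cases hbc
        · rw [heq c hc] at hbc
          exact ih.tail hbc
  refine ⟨Equiv.subtypeEquivRight hdesc, rfl, ?_⟩
  intro a b
  show p b.1 = some a.1 ↔ p' b.1 = some a.1
  by_cases hbx : b.1 = x
  · constructor
    · intro h
      rw [hbx, hpx] at h
      injection h with h
      exact absurd (h ▸ a.2) hu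
    · intro h
      rw [hbx, hpx'] at h
      cases h
  · rw [heq b.1 hbx]

/-- in a rooted forest of depth at most `σ` (before and after), a single edge
deletion (a vertex's parent pointer removed) or insertion (a root acquiring a parent)
changes the subtree isomorphism class of at most `σ` vertices. -/
theorem stmt_13 {V : Type*} [Fintype V] (p p' : V → Option V) (σ : ℕ)
    (hacc : ∀ v, Acc (fun x y : V => p y = some x) v)
    (hacc' : ∀ v, Acc (fun x y : V => p' y = some x) v)
    (hdepth : ∀ v : V, (PAnc p v).ncard ≤ σ ∧ (PAnc p' v).ncard ≤ σ)
    (hchange : ∃ x : V, (∀ z : V, z ≠ x → p' z = p z) ∧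
      ((p x ≠ none ∧ p' x = none) ∨ (p x = none ∧ p' x ≠ none))) :
    {v : V | ¬ PSubtreeIso p p' v v}.ncard ≤ σ := by
  obtain ⟨x, heq, hcase | hcase⟩ := hchange
  · obtain ⟨hne, hx'⟩ := hcase
    obtain ⟨u, hu⟩ := Option.ne_none_iff_exists'.mp hne
    have hsub : {v : V | ¬ PSubtreeIso p p' v v} ⊆ PAnc p u := by
      intro v hv
      by_contra h
      exact hv (key_lemma p p' x u v heq hu hx' h)
    exact le_trans (Set.ncard_le_ncard hsub (Set.toFinite _)) (hdepth u).1
  · obtain ⟨hx, hne⟩ := hcase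
    obtain ⟨u, hu⟩ := Option.ne_none_iff_exists'.mp hne
    have heq' : ∀ z : V, z ≠ x → p z = p' z := fun z hz => (heq z hz).symm
    have hsub : {v : V | ¬ PSubtreeIso p p' v v} ⊆ PAnc p' u := by
      intro v hv
      by_contra h
      exact hv (key_lemma p' p x u v heq' hu hx h).symm'
    exact le_trans (Set.ncard_le_ncard hsub (Set.toFinite _)) (hdepth u).2
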